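/- arXiv:2012.12932 — 5 statements merged into one kernel-verified Lean document; each statement's English description precedes it below -/
import Mathlib

section
/- Let L ⊆ Σ* be a prefix-closed language and K ⊆ L a prefix-closed language. Then the union K↑ of all prefix-closed sublanguages of K that are both controllable with respect to L and Σ_uc and normal with respect to Σ_o and L is itself prefix-closed, controllable with respect to L and Σ_uc, and normal with respect to Σ_o and L; hence K↑ is the unique supremal controllable and normal prefix-closed sublanguage of K. -/
attribute [local instance] Classical.propDecidable

noncomputable section

namespace RobustDES

variable {S : Type}

/-- A language is prefix-closed if every prefix of a member is a member. -/
def PrefixClosed (K : Set (List S)) : Prop :=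
  ∀ u v : List S, u ++ v ∈ K → u ∈ K

/-- Natural projection `P_{ΣΣo}` erasing events not in `So`. -/
def projOn (So : Set S) (s : List S) : List S :=
  s.filter fun e => decide (e ∈ So)

/-- `K` is controllable with respect to `L` and the uncontrollable events `Suc`. -/
def Controllable (L : Set (List S)) (Suc : Set S) (K : Set (List S)) : Prop :=
  ∀ s e, s ∈ K → e ∈ Suc → s ++ [e] ∈ L → s ++ [e] ∈ K

/-- `K` is normal with respect to `So` and `L`: `K = P⁻¹(P(K)) ∩ L`. -/
def Normal (L : Set (List S)) (So : Set S) (K : Set (List S)) : Prop :=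
  K = {s | (∃ t ∈ K, projOn So s = projOn So t) ∧ s ∈ L}

/-- The union of all prefix-closed, controllable and normal sublanguages of `K`. -/
def supCN (L : Set (List S)) (Suc So : Set S) (K : Set (List S)) : Set (List S) :=
  ⋃₀ {K' | K' ⊆ K ∧ PrefixClosed K' ∧ Controllable L Suc K' ∧ Normal L So K'}

/-- the union `K↑` of all prefix-closed sublanguages of `K` that are
controllable w.r.t. `L,Σuc` and normal w.r.t. `Σo,L` is itself prefix-closed,
controllable and normal; it is contained in `K`, it contains every such sublanguage,
and it is the unique supremal such sublanguage. -/
theorem supremal_controllable_normal [Finite S]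
    (Sc Suc So Suo : Set S)
    (hpartc : Sc ∪ Suc = Set.univ) (hdisjc : Disjoint Sc Suc)
    (hparto : So ∪ Suo = Set.univ) (hdisjo : Disjoint So Suo)
    (L K : Set (List S)) (hL : PrefixClosed L) (hK : PrefixClosed K) (hKL : K ⊆ L) :
    PrefixClosed (supCN L Suc So K) ∧
    Controllable L Suc (supCN L Suc So K) ∧
    Normal L So (supCN L Suc So K) ∧
    supCN L Suc So K ⊆ K ∧
    (∀ K', K' ⊆ K → PrefixClosed K' → Controllable L Suc K' → Normal L So K' →
      K' ⊆ supCN L Suc So K) ∧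
    (∀ M, M ⊆ K → PrefixClosed M → Controllable L Suc M → Normal L So M →
      (∀ K', K' ⊆ K → PrefixClosed K' → Controllable L Suc K' → Normal L So K' → K' ⊆ M) →
      M = supCN L Suc So K) := by

  refine ⟨?_, ?_, ?_, ?_, ?_, ?_⟩
  · -- prefix-closed
    intro u v huv
    obtain ⟨K', ⟨hsub, hpc, hctrl, hnorm⟩, hm⟩ := huv
    exact ⟨K', ⟨hsub, hpc, hctrl, hnorm⟩, hpc u v hm⟩
  · -- controllable
    intro s e hs he hL'
    obtain ⟨K', hK', hm⟩ := hs
    exact ⟨K', hK', hK'.2.2.1 s e hm he hL'⟩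
  · -- normal
    ext s
    constructor
    · rintro ⟨K', hK', hm⟩
      have := hK'.2.2.2
      rw [this] at hm
      obtain ⟨⟨t, ht, he⟩, hsL⟩ := hm
      exact ⟨⟨t, ⟨K', hK', ht⟩, he⟩, hsL⟩
    · rintro ⟨⟨t, ⟨K', hK', ht⟩, he⟩, hsL⟩
      refine ⟨K', hK', ?_⟩
      rw [hK'.2.2.2]
      exact ⟨⟨t, ht, he⟩, hsL⟩
  · rintro s ⟨K', hK', hm⟩
    exact hK'.1 hm
  · intro K' h1 h2 h3 h4
    exact Set.subset_sUnion_of_mem ⟨h1, h2, h3, h4⟩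
  · intro M hMK hMpc hMc hMn hmax
    apply Set.Subset.antisymm
    · exact Set.subset_sUnion_of_mem ⟨hMK, hMpc, hMc, hMn⟩
    · exact Set.sUnion_subset fun K' ⟨h1, h2, h3, h4⟩ => hmax K' h1 h2 h3 h4


end RobustDES
end
end

section
/- Let L ⊆ Σ* be a prefix-closed language and K ⊆ L a prefix-closed language, and suppose every controllable event is observable, i.e., Σ_c ⊆ Σ_o. If K is controllable with respect to L and Σ_uc and observable with respect to Σ_o and Σ_c, then K is normal with respect to Σ_o and L. Consequently, under Σ_c ⊆ Σ_o, a prefix-closed K ⊆ L is controllable and observable if and only if it is controllable and normal. -/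
attribute [local instance] Classical.propDecidable

noncomputable section

namespace RobustDES

variable {S : Type}

/-- `K` is observable with respect to `So`, `Sc` (and `L`). -/
def Observable (L : Set (List S)) (So Sc : Set S) (K : Set (List S)) : Prop :=
  ∀ s e, s ∈ K → e ∈ Sc → s ++ [e] ∈ K →
    ∀ s', projOn So s' = projOn So s → s' ++ [e] ∈ L → s' ++ [e] ∈ K


lemma projOn_append (So : Set S) (u v : List S) :
    projOn So (u ++ v) = projOn So u ++ projOn So v := List.filter_append ..

lemma projOn_cons_mem {So : Set S} {e : S} (he : e ∈ So) (s : List S) :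
    projOn So (e :: s) = e :: projOn So s := by simp [projOn, he]

lemma projOn_cons_not_mem {So : Set S} {e : S} (he : e ∉ So) (s : List S) :
    projOn So (e :: s) = projOn So s := by simp [projOn, he]

lemma projOn_split {So : Set S} {e : S} (he : e ∈ So) :
    ∀ {t w : List S}, projOn So t = w ++ [e] →
      ∃ t1 t2, t = t1 ++ e :: t2 ∧ projOn So t1 = w := by
  intro t
  induction t with
  | nil => intro w h; simp [projOn] at h
  | cons a t ih =>
    intro w h
    by_cases ha : a ∈ So
    · rw [projOn_cons_mem ha] at h
      cases w with
      | nil =>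
        simp at h
        exact ⟨[], t, by simp [h.1], by simp [projOn]⟩
      | cons b w' =>
        simp at h
        obtain ⟨t1, t2, rfl, hp⟩ := ih h.2
        exact ⟨a :: t1, t2, rfl, by rw [projOn_cons_mem ha, hp, h.1]⟩
    · rw [projOn_cons_not_mem ha] at h
      obtain ⟨t1, t2, rfl, hp⟩ := ih h
      exact ⟨a :: t1, t2, rfl, by rw [projOn_cons_not_mem ha, hp]⟩

/-- if every controllable event is observable (`Sc ⊆ So`), then a
controllable and observable prefix-closed sublanguage is normal; consequently,
controllable-and-observable is equivalent to controllable-and-normal. -/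
theorem controllable_observable_iff_controllable_normal [Finite S]
    (Sc Suc So Suo : Set S)
    (hpartc : Sc ∪ Suc = Set.univ) (hdisjc : Disjoint Sc Suc)
    (hparto : So ∪ Suo = Set.univ) (hdisjo : Disjoint So Suo)
    (hco : Sc ⊆ So)
    (L K : Set (List S)) (hL : PrefixClosed L) (hK : PrefixClosed K) (hKL : K ⊆ L) :
    (Controllable L Suc K → Observable L So Sc K → Normal L So K) ∧
    (Controllable L Suc K ∧ Observable L So Sc K ↔
      Controllable L Suc K ∧ Normal L So K) :=  by
  have cases_e : ∀ e : S, e ∈ Sc ∨ e ∈ Suc := by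
    intro e
    have : e ∈ Sc ∪ Suc := hpartc ▸ Set.mem_univ e
    exact this
  have main : Controllable L Suc K → Observable L So Sc K → Normal L So K := by
    intro hc ho
    have claim : ∀ s, s ∈ L → (∃ t ∈ K, projOn So s = projOn So t) → s ∈ K := by
      intro s
      induction s using List.reverseRecOn with
      | nil =>
        rintro _ ⟨t, htK, _⟩
        exact hK [] t (by simpa using htK)
      | append_singleton u e ih =>
        rintro hsL ⟨t, htK, hpt⟩
        have huL : u ∈ L := hL u [e] hsL
        by_cases heo : e ∈ So
        · have hdec : projOn So t = projOn So u ++ [e] := by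
            rw [← hpt, projOn_append]
            simp [projOn, heo]
          obtain ⟨t1, t2, rfl, ht1⟩ := projOn_split heo hdec
          have ht1e : t1 ++ [e] ∈ K := hK (t1 ++ [e]) t2 (by simpa using htK)
          have ht1K : t1 ∈ K := hK t1 [e] ht1e
          have huK : u ∈ K := ih huL ⟨t1, ht1K, ht1.symm⟩
          rcases cases_e e with h | h
          · exact ho t1 e ht1K h ht1e u ht1.symm hsL
          · exact hc u e huK h hsL
        · have huK : u ∈ K := ih huL ⟨t, htK, by
            rw [← hpt, projOn_append]; simp [projOn, heo]⟩
          rcases cases_e e with h | h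
          · exact absurd (hco h) heo
          · exact hc u e huK h hsL
    ext s
    constructor
    · intro hs
      exact ⟨⟨s, hs, rfl⟩, hKL hs⟩
    · rintro ⟨⟨t, htK, hpt⟩, hsL⟩
      exact claim s hsL ⟨t, htK, hpt⟩
  have norm_obs : Normal L So K → Observable L So Sc K := by
    intro hn s e hsK heC hseK s' hp hs'L
    rw [hn]
    exact ⟨⟨s ++ [e], hseK, by rw [projOn_append, projOn_append, hp]⟩, hs'L⟩
  exact ⟨main, ⟨fun ⟨hc, ho⟩ => ⟨hc, main hc ho⟩, fun ⟨hc, hn⟩ => ⟨hc, norm_obs hn⟩⟩⟩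


end RobustDES
end
end

section
/- The attack automaton cannot disable events of the supervised plant: if s ∈ L(G_a||R_a||A), e ∈ Σ_o, and se ∈ L(G_a||R_a), then either se ∈ L(G_a||R_a||A), or e ∈ Σ_a and s e_d ∈ L(G_a||R_a||A). -/
attribute [local instance] Classical.propDecidable

noncomputable section

namespace RobustDES

/-- Events of the attacked system `Σ_m = Σ ∪ Σ_a^i ∪ Σ_a^d`:
`plain a` is a legitimate event `a ∈ Σ`, `ins a` is the inserted copy `a_i`
and `del a` is the deleted copy `a_d`. -/
inductive Ev (S : Type) : Type
  | plain : S → Ev S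
  | ins : S → Ev S
  | del : S → Ev S

/-- Extension of a partial transition function to strings. -/
def run {X E : Type} (δ : X → E → Option X) : X → List E → Option X
  | x, [] => some x
  | x, e :: s => (δ x e).bind fun y => run δ y s

/-- The language generated by a partial automaton `(X, δ, x0)`. -/
def Lang {X E : Type} (δ : X → E → Option X) (x0 : X) : Set (List E) :=
  { s | (run δ x0 s).isSome }

variable {S XG XR XA : Type}

/-- The projection `P^G : Σ_m* → Σ*` (`a, a_d ↦ a`, `a_i ↦ ε`). -/
def PGproj : List (Ev S) → List S := fun s =>
  s.flatMap fun e =>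
    match e with
    | .plain a => [a]
    | .del a => [a]
    | .ins _ => []

/-- The projection `P^S : Σ_m* → Σ*` (`a, a_i ↦ a`, `a_d ↦ ε`). -/
def PSproj : List (Ev S) → List S := fun s =>
  s.flatMap fun e =>
    match e with
    | .plain a => [a]
    | .ins a => [a]
    | .del _ => []

/-- Membership of a tagged event in `Σ_{o,e} = Σ_o ∪ Σ_a^i ∪ Σ_a^d`. -/
def inOe (So Sa : Set S) : Ev S → Prop
  | .plain a => a ∈ So
  | .ins a => a ∈ Sa
  | .del a => a ∈ Sa

/-- Natural projection `P_{Σ_mΣ_{o,e}}` erasing the unobservable events `Σ_uo`. -/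
def projOe (So : Set S) : List (Ev S) → List (Ev S) := fun s =>
  s.flatMap fun e =>
    match e with
    | .plain a => if a ∈ So then [Ev.plain a] else []
    | e => [e]

/-- Transition function of the attacked plant `G_a` (over `Σ_m`):
`δ_{G_a}(x,e) = δ_G(x, P^G(e))`. -/
def δGa (Sa : Set S) (δG : XG → S → Option XG) : XG → Ev S → Option XG
  | x, .plain a => δG x a
  | x, .del a => if a ∈ Sa then δG x a else none
  | x, .ins a => if a ∈ Sa then some x else none

/-- Active (legitimate) event set of a supervisor state. -/
def ΓR (δR : XR → S → Option XR) (y : XR) : Set S := {e | (δR y e).isSome}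

/-- Transition function of the attacked supervisor `R_a` (over `Σ_m`). -/
def δRa (Sa : Set S) (δR : XR → S → Option XR) : XR → Ev S → Option XR
  | y, .plain a => δR y a
  | y, .ins a =>
      if a ∈ Sa then (if (δR y a).isSome then δR y a else some y) else none
  | y, .del a =>
      if a ∈ Sa then (if (δR y a).isSome then some y else none) else none

/-- `R` is a supervisor realization: every uncontrollable event is enabled
everywhere and enabled unobservable events self-loop. -/
def IsSupRealization (So Suc : Set S) (δR : XR → S → Option XR) : Prop :=
  (∀ x e, e ∈ Suc → (δR x e).isSome) ∧
  (∀ x e, e ∉ So → (δR x e).isSome → δR x e = some x)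

/-- `A` is an attack automaton over `Σ_{o,e}`: it is complete on `Σ_o \ Σ_a`,
for every `e ∈ Σ_a` either `e` or `e_d` is defined, and it is undefined outside
`Σ_{o,e}`. -/
def IsAttack (So Sa : Set S) (δA : XA → Ev S → Option XA) : Prop :=
  (∀ q a, a ∈ So → a ∉ Sa → (δA q (.plain a)).isSome) ∧
  (∀ q a, a ∈ Sa → ((δA q (.plain a)).isSome ∨ (δA q (.del a)).isSome)) ∧
  (∀ q e, ¬ inOe So Sa e → δA q e = none)

/-- Transition function of the composition `G_a || R_a || A` over `Σ_m`:
all three components move on events of `Σ_{o,e}`, only `G_a` and `R_a` move on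
unobservable events. -/
def δGRA (So Sa : Set S) (δG : XG → S → Option XG) (δR : XR → S → Option XR)
    (δA : XA → Ev S → Option XA) :
    XG × XR × XA → Ev S → Option (XG × XR × XA) := fun p e =>
  match e with
  | .plain a =>
    if a ∈ So then
      match δGa Sa δG p.1 (.plain a), δRa Sa δR p.2.1 (.plain a), δA p.2.2 (.plain a) with
      | some x, some y, some z => some (x, y, z)
      | _, _, _ => none
    else
      match δGa Sa δG p.1 (.plain a), δRa Sa δR p.2.1 (.plain a) with
      | some x, some y => some (x, y, p.2.2)
      | _, _ => none
  | e =>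
      match δGa Sa δG p.1 e, δRa Sa δR p.2.1 e, δA p.2.2 e with
      | some x, some y, some z => some (x, y, z)
      | _, _, _ => none

/-- Transition function of the composition `G_a || R_a` over `Σ_m`. -/
def δGaRa (Sa : Set S) (δG : XG → S → Option XG) (δR : XR → S → Option XR) :
    XG × XR → Ev S → Option (XG × XR) := fun p e =>
  match δGa Sa δG p.1 e, δRa Sa δR p.2 e with
  | some x, some y => some (x, y)
  | _, _ => none

/-- `R` is robust w.r.t. `G`, `X_crit` and `A`:
`δ_G(x_{0,G}, s) ∉ X_crit` for every `s ∈ L(S_A/G) = P^G(L(G_a||R_a||A))`. -/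
def Robust (So Sa : Set S) (Xcrit : Set XG)
    (δG : XG → S → Option XG) (x0G : XG)
    (δR : XR → S → Option XR) (x0R : XR)
    (δA : XA → Ev S → Option XA) (x0A : XA) : Prop :=
  ∀ t ∈ Lang (δGRA So Sa δG δR δA) (x0G, x0R, x0A),
    ∀ x, run δG x0G (PGproj t) = some x → x ∉ Xcrit

/-- Total extension `Δ_R` of `δ_R` over observable strings. -/
def ΔRrun (δR : XR → S → Option XR) : XR → List S → XR
  | y, [] => y
  | y, e :: s => ΔRrun δR ((δR y e).getD y) s

/-- Control decision `C_R(s) = Γ_R(Δ_R(x_{0,R}, s))`. -/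
def CR (δR : XR → S → Option XR) (x0R : XR) (s : List S) : Set S :=
  {e | (δR (ΔRrun δR x0R s) e).isSome}

/-- The state estimate under attack
`RE(s) = {x : x = δ_{G_a}(x_{0,G}, t), t ∈ P⁻¹_{Σ_mΣ_{o,e}}(s) ∩ L(G_a||R_a||A)}`. -/
def RE (So Sa : Set S) (δG : XG → S → Option XG) (x0G : XG)
    (δR : XR → S → Option XR) (x0R : XR)
    (δA : XA → Ev S → Option XA) (x0A : XA) (s : List (Ev S)) : Set XG :=
  {x | ∃ t, projOe So t = s ∧ t ∈ Lang (δGRA So Sa δG δR δA) (x0G, x0R, x0A) ∧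
        run (δGa Sa δG) x0G t = some x}

/-! ### The arena -/

/-- Unobservable reach `UR_γ(Q)`. -/
def URch (So : Set S) (δG : XG → S → Option XG) (γ : Set S) (Q : Set XG) : Set XG :=
  {x | ∃ t : List S, (∀ a ∈ t, a ∉ So ∧ a ∈ γ) ∧ ∃ q ∈ Q, run δG q t = some x}

/-- Observable reach `NX_e(Q)`. -/
def NXr (δG : XG → S → Option XG) (a : S) (Q : Set XG) : Set XG :=
  {x | ∃ q ∈ Q, δG q a = some x}

/-- Active event set `Γ_G(Q)` of a set of plant states. -/
def ΓGset (δG : XG → S → Option XG) (Q : Set XG) : Set S :=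
  {a | ∃ x ∈ Q, (δG x a).isSome}

/-- Player-1 states of the arena. -/
abbrev AQ1 (XG XA : Type) := Set XG × XA

/-- Player-2 states of the arena. -/
abbrev AQ2 (S XG XA : Type) := Set XG × XA × Set S × Option S

/-- Player-1 transition `h₁((S₁,S₂),γ) = (UR_γ(S₁), S₂, γ, ε)`. -/
def h1 (So : Set S) (δG : XG → S → Option XG) (p : AQ1 XG XA) (γ : Set S) :
    AQ2 S XG XA :=
  (URch So δG γ p.1, p.2, γ, none)

/-- Player-2 transition `h₂`. -/
def h2 (So Sa : Set S) (δG : XG → S → Option XG) (δA : XA → Ev S → Option XA)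
    (q : AQ2 S XG XA) : Ev S → Option (AQ1 XG XA ⊕ AQ2 S XG XA)
  | .plain a =>
    if a ∈ So then
      if q.2.2.2 = some a then some (Sum.inl (q.1, q.2.1))
      else if q.2.2.2 = none ∧ a ∈ ΓGset δG q.1 ∧ a ∈ q.2.2.1 then
        (δA q.2.1 (.plain a)).map fun z => Sum.inl (NXr δG a q.1, z)
      else none
    else none
  | .ins a =>
    if a ∈ Sa ∧ q.2.2.2 = none then
      (δA q.2.1 (.ins a)).map fun z => Sum.inr (q.1, z, q.2.2.1, some a)
    else none
  | .del a =>
    if a ∈ Sa ∧ q.2.2.2 = none ∧ a ∈ ΓGset δG q.1 ∧ a ∈ q.2.2.1 then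
      (δA q.2.1 (.del a)).map fun z =>
        Sum.inr (URch So δG q.2.2.1 (NXr δG a q.1), z, q.2.2.1, none)
    else none

/-- One-step map `H₂ : Q₂ × Σ_{o,e} × Γ ⇀ Q₂` of Definition 6. -/
def H2 (So Sa : Set S) (δG : XG → S → Option XG) (δA : XA → Ev S → Option XA)
    (q : AQ2 S XG XA) : Ev S → Set S → Option (AQ2 S XG XA)
  | .plain a, γ =>
      (h2 So Sa δG δA q (.plain a)).bind fun r =>
        match r with
        | .inl p => some (h1 So δG p γ)
        | .inr _ => none
  | .del a, _ =>
      (h2 So Sa δG δA q (.del a)).bind fun r =>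
        match r with
        | .inr q' => some q'
        | .inl _ => none
  | .ins a, γ =>
      (h2 So Sa δG δA q (.ins a)).bind fun r =>
        match r with
        | .inr q' =>
            (h2 So Sa δG δA q' (.plain a)).bind fun r2 =>
              match r2 with
              | .inl p => some (h1 So δG p γ)
              | .inr _ => none
        | .inl _ => none

/-- Extension of `H₂` to strings with a sequence of control decisions. -/
def H2run (So Sa : Set S) (δG : XG → S → Option XG) (δA : XA → Ev S → Option XA) :
    AQ2 S XG XA → List (Ev S) → List (Set S) → Option (AQ2 S XG XA)
  | q, [], [] => some q
  | q, e :: s, γ :: γs =>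
      (H2 So Sa δG δA q e γ).bind fun q' => H2run So Sa δG δA q' s γs
  | _, _ :: _, [] => none
  | _, [], _ :: _ => none

/-- The sequence of control decisions `γ_i = C_R(P^S(s^i))`, `i = 1, …, |s|`. -/
def ctrlSeq (δR : XR → S → Option XR) (x0R : XR) (s : List (Ev S)) : List (Set S) :=
  (List.range s.length).map fun i => CR δR x0R (PSproj (s.take (i + 1)))

/-- Initial arena state `q₀ = ({x_{0,G}}, x_{0,A})`. -/
def arenaInit (x0G : XG) (x0A : XA) : AQ1 XG XA := ({x0G}, x0A)

/-- The arena `𝒜` regarded as a partial automaton over `E = Γ ∪ Σ_{o,e}`. -/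
def δAr (So Suc Sa : Set S) (δG : XG → S → Option XG) (δA : XA → Ev S → Option XA) :
    (AQ1 XG XA ⊕ AQ2 S XG XA) → (Set S ⊕ Ev S) → Option (AQ1 XG XA ⊕ AQ2 S XG XA)
  | .inl p, .inl γ => if Suc ⊆ γ then some (.inr (h1 So δG p γ)) else none
  | .inr q, .inr e => h2 So Sa δG δA q e
  | _, _ => none

/-- The projection `I₁` onto the plant state-estimate component. -/
def I1 : (AQ1 XG XA ⊕ AQ2 S XG XA) → Set XG := Sum.elim Prod.fst Prod.fst

/-- The projection `I₂` onto the attacker-state component. -/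
def I2 : (AQ1 XG XA ⊕ AQ2 S XG XA) → XA := Sum.elim (fun p => p.2) (fun q => q.2.1)

/-- The language `L(𝒜)` of the arena. -/
def LA (So Suc Sa : Set S) (δG : XG → S → Option XG) (δA : XA → Ev S → Option XA)
    (x0G : XG) (x0A : XA) : Set (List (Set S ⊕ Ev S)) :=
  Lang (δAr So Suc Sa δG δA) (Sum.inl (arenaInit x0G x0A))

/-- The language `L(𝒜^{trim})`: strings of `L(𝒜)` whose runs visit no state `q`
with `I₁(q) ∩ X_crit ≠ ∅`. -/
def LAtrim (So Suc Sa : Set S) (δG : XG → S → Option XG)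
    (δA : XA → Ev S → Option XA) (x0G : XG) (x0A : XA) (Xcrit : Set XG) :
    Set (List (Set S ⊕ Ev S)) :=
  {s | s ∈ LA So Suc Sa δG δA x0G x0A ∧
    ∀ u, u <+: s → ∀ st, run (δAr So Suc Sa δG δA) (Sum.inl (arenaInit x0G x0A)) u =
      some st → I1 st ∩ Xcrit = ∅}

/-- The controllable meta-events `E_c = Γ \ {Σ_uc}`. -/
def Ec (Suc : Set S) : Set (Set S ⊕ Ev S) :=
  {a | ∃ γ : Set S, a = Sum.inl γ ∧ Suc ⊆ γ ∧ γ ≠ Suc}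

/-- `K` is controllable w.r.t. `L` and the uncontrollable events `Euc`. -/
def ControllableLang {E : Type} (L : Set (List E)) (Euc : Set E)
    (K : Set (List E)) : Prop :=
  ∀ s ∈ K, ∀ a ∈ Euc, s ++ [a] ∈ L → s ++ [a] ∈ K

/-- `K` is normal w.r.t. the projection `P` and `L`: `K = P⁻¹(P(K)) ∩ L`. -/
def NormalLang {E : Type} (P : List E → List E) (L K : Set (List E)) : Prop :=
  K = {s | s ∈ L ∧ ∃ t ∈ K, P t = P s}

/-- Natural projection of meta-strings onto the observable meta-events
`E_o = E \ Σ_a^e`. -/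
def projEo : List (Set S ⊕ Ev S) → List (Set S ⊕ Ev S) := fun s =>
  s.flatMap fun a =>
    match a with
    | Sum.inr (.ins _) => []
    | Sum.inr (.del _) => []
    | a => [a]

/-- `L(𝒜^{sup})`: the union of all sublanguages of `L(𝒜^{trim})` that are
controllable w.r.t. `L(𝒜)` and `E \ E_c` and normal w.r.t. `E_o` and `L(𝒜)`. -/
def Lsup (So Suc Sa : Set S) (δG : XG → S → Option XG)
    (δA : XA → Ev S → Option XA) (x0G : XG) (x0A : XA) (Xcrit : Set XG) :
    Set (List (Set S ⊕ Ev S)) :=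
  ⋃₀ {K | K ⊆ LAtrim So Suc Sa δG δA x0G x0A Xcrit ∧
      ControllableLang (LA So Suc Sa δG δA x0G x0A) (Ec Suc)ᶜ K ∧
      NormalLang projEo (LA So Suc Sa δG δA x0G x0A) K}

/-- The run word `W(s; γ₀, …, γ_{|s|})` in the arena. -/
def Wword (γ0 : Set S) (s : List (Ev S)) (γs : List (Set S)) :
    List (Set S ⊕ Ev S) :=
  Sum.inl γ0 :: (s.zip γs).flatMap fun p =>
    match p.1 with
    | .plain a => [Sum.inr (Ev.plain a), Sum.inl p.2]
    | .del a => [Sum.inr (Ev.del a)]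
    | .ins a => [Sum.inr (Ev.ins a), Sum.inr (Ev.plain a), Sum.inl p.2]

/-- The projection `η : E* → Σ_o*` erasing all meta-events not in `Σ_o`. -/
def ηproj (So : Set S) : List (Set S ⊕ Ev S) → List S := fun s =>
  s.flatMap fun a =>
    match a with
    | Sum.inr (.plain e) => if e ∈ So then [e] else []
    | _ => []


/-- The all-out attack strategy: a single state with every event of `Σ_{o,e}`
defined (as a self-loop). -/
def allOutδ (So Sa : Set S) : Unit → Ev S → Option Unit := fun _ e =>
  if inOe So Sa e then some () else none

/-- The supervisor extracted from a generator of `L(𝒜^{sup})` by a choice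
function `c` of control decisions (Algorithm 1): on an observable enabled event
follow the arena (choose `c y`, then the event), on an unobservable enabled
event self-loop, and disable events outside `c y`. -/
def extractR {Y : Type} (So : Set S) (δg : Y → (Set S ⊕ Ev S) → Option Y)
    (c : Y → Set S) : Y → S → Option Y := fun y a =>
  if a ∈ c y then
    if a ∈ So then
      some (((δg y (Sum.inl (c y))).bind fun y' =>
        δg y' (Sum.inr (Ev.plain a))).getD y)
    else some y
  else none

/-- The language `L_R` built inductively from a supervisor `R` inside the arena:
`ε ∈ L_R`; from a player-2 state every event of `Σ_{o,e}` feasible in `𝒜` may be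
appended; from a player-1 state the control decisions `Σ_uc` and `C_R(η(s))`
may be appended. -/
inductive LRmem {S XG XA XR : Type} (So Suc Sa : Set S)
    (δG : XG → S → Option XG) (x0G : XG)
    (δA : XA → Ev S → Option XA) (x0A : XA)
    (δR : XR → S → Option XR) (x0R : XR) : List (Set S ⊕ Ev S) → Prop
  | nil : LRmem So Suc Sa δG x0G δA x0A δR x0R []
  | p2 (s : List (Set S ⊕ Ev S)) (q : AQ2 S XG XA) (e : Ev S) :
      LRmem So Suc Sa δG x0G δA x0A δR x0R s →
      run (δAr So Suc Sa δG δA) (Sum.inl (arenaInit x0G x0A)) s = some (Sum.inr q) →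
      inOe So Sa e →
      (run (δAr So Suc Sa δG δA) (Sum.inl (arenaInit x0G x0A))
        (s ++ [Sum.inr e])).isSome →
      LRmem So Suc Sa δG x0G δA x0A δR x0R (s ++ [Sum.inr e])
  | p1uc (s : List (Set S ⊕ Ev S)) (p : AQ1 XG XA) :
      LRmem So Suc Sa δG x0G δA x0A δR x0R s →
      run (δAr So Suc Sa δG δA) (Sum.inl (arenaInit x0G x0A)) s = some (Sum.inl p) →
      LRmem So Suc Sa δG x0G δA x0A δR x0R (s ++ [Sum.inl Suc])
  | p1R (s : List (Set S ⊕ Ev S)) (p : AQ1 XG XA) :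
      LRmem So Suc Sa δG x0G δA x0A δR x0R s →
      run (δAr So Suc Sa δG δA) (Sum.inl (arenaInit x0G x0A)) s = some (Sum.inl p) →
      LRmem So Suc Sa δG x0G δA x0A δR x0R (s ++ [Sum.inl (CR δR x0R (ηproj So s))])

lemma run_append {X E : Type} (δ : X → E → Option X) (x : X) (s t : List E) :
    run δ x (s ++ t) = (run δ x s).bind fun y => run δ y t := by
  induction s generalizing x with
  | nil => simp [run]
  | cons e s ih =>
    simp only [List.cons_append, run]
    cases δ x e <;> simp [ih]

lemma step_proj (So Sa : Set S) (δG : XG → S → Option XG)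
    (δR : XR → S → Option XR) (δA : XA → Ev S → Option XA)
    (p : XG × XR × XA) (e : Ev S) (q : XG × XR × XA)
    (h : δGRA So Sa δG δR δA p e = some q) :
    δGaRa Sa δG δR (p.1, p.2.1) e = some (q.1, q.2.1) := by
  cases e with
  | plain a =>
    by_cases hSo : a ∈ So
    · simp only [δGRA, hSo, if_true] at h
      cases hg : δGa Sa δG p.1 (.plain a) <;>
        cases hr : δRa Sa δR p.2.1 (.plain a) <;>
          cases hz : δA p.2.2 (.plain a) <;>
            simp only [hg, hr, hz] at h <;>
              (cases h; all_goals simp [δGaRa, hg, hr])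
    · simp only [δGRA, hSo, if_false] at h
      cases hg : δGa Sa δG p.1 (.plain a) <;>
        cases hr : δRa Sa δR p.2.1 (.plain a) <;>
          simp only [hg, hr] at h <;>
            (cases h; all_goals simp [δGaRa, hg, hr])
  | ins a =>
    simp only [δGRA] at h
    cases hg : δGa Sa δG p.1 (.ins a) <;>
      cases hr : δRa Sa δR p.2.1 (.ins a) <;>
        cases hz : δA p.2.2 (.ins a) <;>
          simp only [hg, hr, hz] at h <;>
            (cases h; all_goals simp [δGaRa, hg, hr])
  | del a =>
    simp only [δGRA] at h
    cases hg : δGa Sa δG p.1 (.del a) <;>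
      cases hr : δRa Sa δR p.2.1 (.del a) <;>
        cases hz : δA p.2.2 (.del a) <;>
          simp only [hg, hr, hz] at h <;>
            (cases h; all_goals simp [δGaRa, hg, hr])

lemma run_proj (So Sa : Set S) (δG : XG → S → Option XG)
    (δR : XR → S → Option XR) (δA : XA → Ev S → Option XA)
    (s : List (Ev S)) (p q : XG × XR × XA)
    (h : run (δGRA So Sa δG δR δA) p s = some q) :
    run (δGaRa Sa δG δR) (p.1, p.2.1) s = some (q.1, q.2.1) := by
  induction s generalizing p with
  | nil => simp only [run, Option.some_inj] at h ⊢; rw [h]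
  | cons e s ih =>
    simp only [run] at h ⊢
    cases hp : δGRA So Sa δG δR δA p e with
    | none => rw [hp] at h; simp at h
    | some p' =>
      rw [hp] at h
      rw [step_proj So Sa δG δR δA p e p' hp]
      exact ih p' h

/-- the attack automaton cannot disable events of the supervised
plant: if `s ∈ L(G_a||R_a||A)`, `e ∈ Σ_o` and `se ∈ L(G_a||R_a)`, then either
`se ∈ L(G_a||R_a||A)`, or `e ∈ Σ_a` and `s e_d ∈ L(G_a||R_a||A)`. -/
theorem attacker_cannot_disable
    [Finite S] [Finite XG] [Finite XR] [Finite XA]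
    (So Suc Sa : Set S) (hSa : Sa ⊆ So)
    (δG : XG → S → Option XG) (x0G : XG)
    (δR : XR → S → Option XR) (x0R : XR) (hR : IsSupRealization So Suc δR)
    (δA : XA → Ev S → Option XA) (x0A : XA) (hA : IsAttack So Sa δA)
    (s : List (Ev S)) (a : S) (ha : a ∈ So)
    (hs : s ∈ Lang (δGRA So Sa δG δR δA) (x0G, x0R, x0A))
    (hse : s ++ [Ev.plain a] ∈ Lang (δGaRa Sa δG δR) (x0G, x0R)) :
    s ++ [Ev.plain a] ∈ Lang (δGRA So Sa δG δR δA) (x0G, x0R, x0A) ∨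
      (a ∈ Sa ∧ s ++ [Ev.del a] ∈ Lang (δGRA So Sa δG δR δA) (x0G, x0R, x0A)) := by
  -- extract the state reached after s in the full composition
  simp only [Lang, Set.mem_setOf_eq] at hs hse ⊢
  cases hq : run (δGRA So Sa δG δR δA) (x0G, x0R, x0A) s with
  | none => rw [hq] at hs; simp at hs
  | some q =>
  obtain ⟨xg, yr, za⟩ := q
  have hproj : run (δGaRa Sa δG δR) (x0G, x0R) s = some (xg, yr) :=
    run_proj So Sa δG δR δA s (x0G, x0R, x0A) (xg, yr, za) hq
  rw [run_append, hproj] at hse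
  simp only [Option.bind_some, run] at hse
  -- from hse extract that δG xg a and δR yr a are defined
  have hstep : (δGaRa Sa δG δR (xg, yr) (Ev.plain a)).isSome := by
    cases h : δGaRa Sa δG δR (xg, yr) (Ev.plain a) with
    | none => simp [h, run] at hse
    | some _ => simp
  have hx : (δG xg a).isSome := by
    cases h1 : δG xg a with
    | none => simp [δGaRa, δGa, δRa, h1] at hstep
    | some _ => simp
  have hy : (δR yr a).isSome := by
    cases h2 : δR yr a with
    | none =>
      cases h1 : δG xg a <;> simp [δGaRa, δGa, δRa, h1, h2] at hstep
    | some _ => simp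
  obtain ⟨x', hx'⟩ := Option.isSome_iff_exists.mp hx
  obtain ⟨y', hy'⟩ := Option.isSome_iff_exists.mp hy
  by_cases hmem : a ∈ Sa
  · -- attack automaton has plain a or del a defined
    rcases hA.2.1 za a hmem with hz | hz
    · obtain ⟨z', hz'⟩ := Option.isSome_iff_exists.mp hz
      left
      rw [run_append, hq]
      simp only [Option.bind_some, run, δGRA, ha, if_true, δGa, δRa]
      rw [hx', hy', hz']
      simp [run]
    · obtain ⟨z', hz'⟩ := Option.isSome_iff_exists.mp hz
      right
      refine ⟨hmem, ?_⟩
      rw [run_append, hq]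
      simp only [Option.bind_some, run, δGRA, δGa, δRa, hmem, if_true]
      rw [hx', hy', hz']
      simp [run, hy']
  · -- a ∈ So \ Sa : the attack automaton must have plain a defined
    have hz := hA.1 za a ha hmem
    obtain ⟨z', hz'⟩ := Option.isSome_iff_exists.mp hz
    left
    rw [run_append, hq]
    simp only [Option.bind_some, run, δGRA, ha, if_true, δGa, δRa]
    rw [hx', hy', hz']
    simp [run]
end RobustDES
end
end

section
/- Robustness against the all-out attack strategy implies robustness against every attack strategy: let A* be the all-out attack automaton, i.e., the single-state partial finite automaton over Σ_{o,e} whose transition function is defined for every event at its unique state (a self-loop for each e ∈ Σ_{o,e}). If a supervisor realization R is robust with respect to G, X_crit and A*, then for every attack automaton A, R is robust with respect to G, X_crit and A. -/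
attribute [local instance] Classical.propDecidable

noncomputable section

namespace RobustDES

variable {S XG XR XA : Type}

lemma step_sim {S XG XR XA : Type} (So Sa : Set S)
    (δG : XG → S → Option XG) (δR : XR → S → Option XR)
    (δA : XA → Ev S → Option XA)
    (x : XG) (y : XR) (z : XA) (e : Ev S) (x' : XG) (y' : XR) (z' : XA)
    (h : δGRA So Sa δG δR δA (x, y, z) e = some (x', y', z')) :
    δGRA So Sa δG δR (allOutδ So Sa) (x, y, ()) e = some (x', y', ()) := by
  cases e with
  | plain a =>
    by_cases ha : a ∈ So
    · simp only [δGRA, ha, if_pos] at h ⊢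
      cases hg : δGa Sa δG x (.plain a) with
      | none => rw [hg] at h; simp at h
      | some xg =>
        cases hr : δRa Sa δR y (.plain a) with
        | none => rw [hg, hr] at h; simp at h
        | some yr =>
          cases hA : δA z (.plain a) with
          | none => rw [hg, hr, hA] at h; simp at h
          | some za =>
            rw [hg, hr, hA] at h
            simp only [Option.some.injEq, Prod.mk.injEq] at h
            simp [allOutδ, inOe, ha, h.1, h.2.1]
    · simp only [δGRA, ha, if_neg, if_false] at h ⊢
      cases hg : δGa Sa δG x (.plain a) with
      | none => rw [hg] at h; simp at h
      | some xg =>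
        cases hr : δRa Sa δR y (.plain a) with
        | none => rw [hg, hr] at h; simp at h
        | some yr =>
          rw [hg, hr] at h
          simp only [Option.some.injEq, Prod.mk.injEq] at h
          simp [h.1, h.2.1]
  | ins a =>
    simp only [δGRA] at h ⊢
    cases hg : δGa Sa δG x (.ins a) with
    | none => rw [hg] at h; simp at h
    | some xg =>
      have hSa : a ∈ Sa := by
        by_contra hn
        simp [δGa, hn] at hg
      cases hr : δRa Sa δR y (.ins a) with
      | none => rw [hg, hr] at h; simp at h
      | some yr =>
        cases hA : δA z (.ins a) with
        | none => rw [hg, hr, hA] at h; simp at h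
        | some za =>
          rw [hg, hr, hA] at h
          simp only [Option.some.injEq, Prod.mk.injEq] at h
          simp [allOutδ, inOe, hSa, h.1, h.2.1]
  | del a =>
    simp only [δGRA] at h ⊢
    cases hg : δGa Sa δG x (.del a) with
    | none => rw [hg] at h; simp at h
    | some xg =>
      have hSa : a ∈ Sa := by
        by_contra hn
        simp [δGa, hn] at hg
      cases hr : δRa Sa δR y (.del a) with
      | none => rw [hg, hr] at h; simp at h
      | some yr =>
        cases hA : δA z (.del a) with
        | none => rw [hg, hr, hA] at h; simp at h
        | some za =>
          rw [hg, hr, hA] at h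
          simp only [Option.some.injEq, Prod.mk.injEq] at h
          simp [allOutδ, inOe, hSa, h.1, h.2.1]

lemma run_sim {S XG XR XA : Type} (So Sa : Set S)
    (δG : XG → S → Option XG) (δR : XR → S → Option XR)
    (δA : XA → Ev S → Option XA) :
    ∀ (t : List (Ev S)) (x : XG) (y : XR) (z : XA) (x' : XG) (y' : XR) (z' : XA),
      run (δGRA So Sa δG δR δA) (x, y, z) t = some (x', y', z') →
      run (δGRA So Sa δG δR (allOutδ So Sa)) (x, y, ()) t = some (x', y', ()) := by
  intro t
  induction t with
  | nil =>
    intro x y z x' y' z' h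
    simp only [run, Option.some.injEq, Prod.mk.injEq] at h
    simp [run, h.1, h.2.1]
  | cons e s ih =>
    intro x y z x' y' z' h
    simp only [run] at h ⊢
    cases hstep : δGRA So Sa δG δR δA (x, y, z) e with
    | none => rw [hstep] at h; simp at h
    | some p =>
      obtain ⟨x1, y1, z1⟩ := p
      rw [hstep] at h
      simp only [Option.bind_some] at h
      rw [step_sim So Sa δG δR δA x y z e x1 y1 z1 hstep]
      simp only [Option.bind_some]
      exact ih x1 y1 z1 x' y' z' h

/-- a supervisor robust against the all-out attack strategy is
robust against every attack strategy. -/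
theorem robust_allout_implies_robust
    [Finite S] [Finite XG] [Finite XR]
    (So Suc Sa : Set S) (hSa : Sa ⊆ So) (Xcrit : Set XG)
    (δG : XG → S → Option XG) (x0G : XG)
    (δR : XR → S → Option XR) (x0R : XR) (hR : IsSupRealization So Suc δR)
    (hRob : Robust So Sa Xcrit δG x0G δR x0R (allOutδ So Sa) ()) :
    ∀ (XA : Type) (_ : Finite XA) (δA : XA → Ev S → Option XA) (x0A : XA),
      IsAttack So Sa δA → Robust So Sa Xcrit δG x0G δR x0R δA x0A := by
  intro XA _ δA x0A _hAtt
  intro t ht x hx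
  obtain ⟨st, hst⟩ := Option.isSome_iff_exists.mp ht
  obtain ⟨x', y', z'⟩ := st
  have hsim := run_sim So Sa δG δR δA t x0G x0R x0A x' y' z' hst
  have htA : t ∈ Lang (δGRA So Sa δG δR (allOutδ So Sa)) (x0G, x0R, ()) := by
    simp [Lang, Set.mem_setOf_eq, hsim]
  exact hRob t htA x hx

end RobustDES
end
end

section
/- Equation (19): for every s ∈ L(G_a||R_a||A), the control decision of R after the supervisor's observation of s equals the set of legitimate events active in R_a after s, i.e., C_R(P_{ΣΣo}(P^S(s))) = Γ_{R_a}(δ_{R_a}(x_{0,R}, s)) ∩ Σ, where δ_{R_a}(x_{0,R}, s) denotes the R_a-component of the state reached by s in G_a||R_a||A. -/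
attribute [local instance] Classical.propDecidable

noncomputable section

namespace RobustDES

variable {S XG XR XA : Type}

lemma supervisor_component_eq_ΔRrun
    (So Sa : Set S) (hSa : Sa ⊆ So)
    (δG : XG → S → Option XG)
    (δR : XR → S → Option XR)
    (hR2 : ∀ x e, e ∉ So → (δR x e).isSome → δR x e = some x)
    (δA : XA → Ev S → Option XA) :
    ∀ (s : List (Ev S)) (p q : XG × XR × XA),
      run (δGRA So Sa δG δR δA) p s = some q →
      ΔRrun δR p.2.1 (projOn So (PSproj s)) = q.2.1 := by
  intro s
  induction s with
  | nil =>
    intro p q h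
    simp [run] at h
    simp [projOn, PSproj, ΔRrun, h]
  | cons e s ih =>
    intro p q h
    simp only [run, Option.bind_eq_some_iff] at h
    obtain ⟨r, hr, hrun⟩ := h
    have IH := ih r q hrun
    cases e with
    | plain a =>
      by_cases ha : a ∈ So
      · -- observable plain event
        have hstep : δR p.2.1 a = some r.2.1 := by
          simp only [δGRA, if_pos ha] at hr
          cases hx : δGa Sa δG p.1 (Ev.plain a) with
          | none => simp [hx] at hr
          | some x1 =>
            cases hy : δRa Sa δR p.2.1 (Ev.plain a) with
            | none => simp [hx, hy] at hr
            | some y1 =>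
              cases hz : δA p.2.2 (Ev.plain a) with
              | none => simp [hx, hy, hz] at hr
              | some z1 =>
                simp [hx, hy, hz] at hr
                simpa [δRa, ← hr] using hy
        have : projOn So (PSproj (Ev.plain a :: s)) =
            a :: projOn So (PSproj s) := by
          simp [projOn, PSproj, ha]
        rw [this]
        simpa [ΔRrun, hstep] using IH
      · -- unobservable plain event
        have hstep : δR p.2.1 a = some r.2.1 := by
          simp only [δGRA, if_neg ha] at hr
          cases hx : δGa Sa δG p.1 (Ev.plain a) with
          | none => simp [hx] at hr
          | some x1 =>
            cases hy : δRa Sa δR p.2.1 (Ev.plain a) with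
            | none => simp [hx, hy] at hr
            | some y1 =>
              simp [hx, hy] at hr
              simpa [δRa, ← hr] using hy
        have hself : δR p.2.1 a = some p.2.1 :=
          hR2 _ _ ha (by simp [hstep])
        have hpr : r.2.1 = p.2.1 := by
          rw [hself] at hstep; exact (Option.some_inj.mp hstep).symm
        have : projOn So (PSproj (Ev.plain a :: s)) =
            projOn So (PSproj s) := by
          simp [projOn, PSproj, ha]
        rw [this, ← hpr]; exact IH
    | ins a =>
      have hy' : δRa Sa δR p.2.1 (Ev.ins a) = some r.2.1 ∧ a ∈ Sa := by
        simp only [δGRA] at hr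
        cases hx : δGa Sa δG p.1 (Ev.ins a) with
        | none => simp [hx] at hr
        | some x1 =>
          cases hy : δRa Sa δR p.2.1 (Ev.ins a) with
          | none => simp [hx, hy] at hr
          | some y1 =>
            cases hz : δA p.2.2 (Ev.ins a) with
            | none => simp [hx, hy, hz] at hr
            | some z1 =>
              simp [hx, hy, hz] at hr
              constructor
              · rw [← hr]
              · by_contra haSa
                simp [δGa, haSa] at hx
      obtain ⟨hy, haSa⟩ := hy'
      have ha : a ∈ So := hSa haSa
      have hstep : (δR p.2.1 a).getD p.2.1 = r.2.1 := by
        simp only [δRa, if_pos haSa] at hy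
        by_cases hd : (δR p.2.1 a).isSome
        · rw [if_pos hd] at hy
          cases hv : δR p.2.1 a with
          | none => simp [hv] at hd
          | some v => rw [hv] at hy; simp [hv, Option.some_inj.mp hy]
        · rw [if_neg hd] at hy
          cases hv : δR p.2.1 a with
          | none => simp [Option.some_inj.mp hy]
          | some v => simp [hv] at hd
      have : projOn So (PSproj (Ev.ins a :: s)) =
          a :: projOn So (PSproj s) := by
        simp [projOn, PSproj, ha]
      rw [this]
      simpa [ΔRrun, hstep] using IH
    | del a =>
      have hy : δRa Sa δR p.2.1 (Ev.del a) = some r.2.1 := by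
        simp only [δGRA] at hr
        cases hx : δGa Sa δG p.1 (Ev.del a) with
        | none => simp [hx] at hr
        | some x1 =>
          cases hy : δRa Sa δR p.2.1 (Ev.del a) with
          | none => simp [hx, hy] at hr
          | some y1 =>
            cases hz : δA p.2.2 (Ev.del a) with
            | none => simp [hx, hy, hz] at hr
            | some z1 =>
              simp [hx, hy, hz] at hr
              rw [← hr]
      have hpr : r.2.1 = p.2.1 := by
        simp only [δRa] at hy
        by_cases haSa : a ∈ Sa
        · rw [if_pos haSa] at hy
          by_cases hd : (δR p.2.1 a).isSome
          · rw [if_pos hd] at hy; exact (Option.some_inj.mp hy).symm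
          · simp [hd] at hy
        · simp [haSa] at hy
      have : projOn So (PSproj (Ev.del a :: s)) = projOn So (PSproj s) := by
        simp [projOn, PSproj]
      rw [this, ← hpr]; exact IH

/-- Equation (19): for every `s ∈ L(G_a||R_a||A)`,
`C_R(P_{ΣΣo}(P^S(s))) = Γ_{R_a}(δ_{R_a}(x_{0,R}, s)) ∩ Σ`, where
`δ_{R_a}(x_{0,R}, s)` is the `R_a`-component of the state reached by `s`. -/
theorem control_decision_eq_active_legitimate
    [Finite S] [Finite XG] [Finite XR] [Finite XA]
    (So Suc Sa : Set S) (hSa : Sa ⊆ So)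
    (δG : XG → S → Option XG) (x0G : XG)
    (δR : XR → S → Option XR) (x0R : XR) (hR : IsSupRealization So Suc δR)
    (δA : XA → Ev S → Option XA) (x0A : XA) (hA : IsAttack So Sa δA)
    (s : List (Ev S)) (x : XG) (y : XR) (z : XA)
    (h : run (δGRA So Sa δG δR δA) (x0G, x0R, x0A) s = some (x, y, z)) :
    CR δR x0R (projOn So (PSproj s)) = {a | (δRa Sa δR y (Ev.plain a)).isSome} := by
  have key := supervisor_component_eq_ΔRrun So Sa hSa δG δR hR.2 δA s
    (x0G, x0R, x0A) (x, y, z) h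
  simp only at key
  ext a
  simp [CR, key, δRa]
end RobustDES
end
end
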